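/- There exists a continuous mapping ℝ × [0,1] × E → ℝ, (x,t,G) ↦ G_t(x), with the following properties: (i) for each G ∈ E, the family (G_t)_{t∈[0,1]} is a homotopy between G⁻ and G⁺, that is G_0 = G⁻ and G_1 = G⁺; (ii) for all t ∈ [0,1], G_t ∈ E_mon; (iii) for every x ∈ ℝ, the map t ↦ G_t(x) is monotonically increasing; (iv) if G_t(x) ≠ G(x), then x ∈ U(G_t). (One such mapping is G_t(x) = inf_{ζ≥x} sup_{ξ∈[ζ−t,ζ]} G(ξ).) -/

import Mathlib

open Filter Topology UniformConvergence

/-- The space `E` of degree-one lifts of circle endomorphisms, carrying the topology of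
uniform convergence (realised as a subtype of `ℝ →ᵤ ℝ`). -/
abbrev LiftSpace : Type :=
  {G : ℝ →ᵤ ℝ // Continuous (UniformFun.toFun G) ∧
    ∀ (x : ℝ) (k : ℤ), UniformFun.toFun G (x + k) = UniformFun.toFun G x + k}

/-- `U(G)`: the union of the interiors of the plateaus of `G`, i.e. the set of points `x`
such that `G([x−ε,x+ε]) = {G(x)}` for some `ε > 0`. -/
def plateauU (G : ℝ → ℝ) : Set ℝ :=
  {x | ∃ ε > 0, ∀ y ∈ Set.Icc (x - ε) (x + ε), G y = G x}

namespace Stmt8Aux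
open Set



/-- degree-one lift data on a bare function -/
def Good (G : ℝ → ℝ) : Prop := Continuous G ∧ ∀ (x : ℝ) (k : ℤ), G (x + k) = G x + k

noncomputable def M (G : ℝ → ℝ) (t ζ : ℝ) : ℝ := sSup (G '' Set.Icc (ζ - t) ζ)
noncomputable def Hr (G : ℝ → ℝ) (t x : ℝ) : ℝ := sInf ((fun ζ => M G t ζ) '' Set.Ici x)

lemma Good.bounds {G : ℝ → ℝ} (hG : Good G) :
    ∃ a b : ℝ, a ≤ b ∧ (∀ u, u + a ≤ G u) ∧ (∀ u, G u ≤ u + b) := by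
  obtain ⟨hc, hk⟩ := hG
  set F : ℝ → ℝ := fun u => G u - u with hF
  have hFc : Continuous F := hc.sub continuous_id
  have hFk : ∀ (u : ℝ) (k : ℤ), F (u + k) = F u := by
    intro u k; simp only [hF, hk u k]; ring
  obtain ⟨u1, hu1, hmin⟩ := isCompact_Icc.exists_isMinOn (s := Set.Icc (0:ℝ) 1)
    (Set.nonempty_Icc.2 zero_le_one) hFc.continuousOn
  obtain ⟨u2, hu2, hmax⟩ := isCompact_Icc.exists_isMaxOn (s := Set.Icc (0:ℝ) 1)
    (Set.nonempty_Icc.2 zero_le_one) hFc.continuousOn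
  have key : ∀ u, F u1 ≤ F u ∧ F u ≤ F u2 := by
    intro u
    have h1 : F (u - ⌊u⌋) = F u := by
      have := hFk (u - ⌊u⌋) ⌊u⌋; rw [sub_add_cancel] at this; exact this.symm
    have hmem : u - ⌊u⌋ ∈ Set.Icc (0:ℝ) 1 := by
      constructor
      · linarith [Int.floor_le u]
      · linarith [Int.lt_floor_add_one u]
    exact ⟨h1 ▸ hmin hmem, h1 ▸ hmax hmem⟩
  refine ⟨F u1, F u2, (key u1).2, fun u => ?_, fun u => ?_⟩
  · have := (key u).1; simp only [hF] at this ⊢; linarith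
  · have := (key u).2; simp only [hF] at this ⊢; linarith

lemma Good.ucont {G : ℝ → ℝ} (hG : Good G) {ε : ℝ} (hε : 0 < ε) :
    ∃ δ > 0, ∀ u v : ℝ, |u - v| ≤ δ → |G u - G v| ≤ ε := by
  obtain ⟨hc, hk⟩ := hG
  have hucont : UniformContinuousOn G (Set.Icc (-1 : ℝ) 2) :=
    isCompact_Icc.uniformContinuousOn_of_continuous hc.continuousOn
  rw [Metric.uniformContinuousOn_iff] at hucont
  obtain ⟨δ0, hδ0, hd⟩ := hucont ε hε
  refine ⟨min (δ0 / 2) (1 / 2), by positivity, fun u v huv => ?_⟩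
  have huv1 : |u - v| ≤ 1/2 := le_trans huv (min_le_right _ _)
  have huv2 : |u - v| < δ0 := lt_of_le_of_lt (le_trans huv (min_le_left _ _)) (by linarith)
  set k : ℤ := ⌊v⌋ with hkdef
  have hvk : v - k ∈ Set.Icc (-1:ℝ) 2 := by
    constructor
    · linarith [Int.floor_le v]
    · linarith [Int.lt_floor_add_one v]
  have habs := abs_le.1 huv1
  have huk : u - k ∈ Set.Icc (-1:ℝ) 2 := by
    constructor
    · have := Int.floor_le v; linarith
    · have := Int.lt_floor_add_one v; linarith
  have hGu : G (u - k) = G u - k := by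
    have := hk (u - k) k; rw [sub_add_cancel] at this; linarith
  have hGv : G (v - k) = G v - k := by
    have := hk (v - k) k; rw [sub_add_cancel] at this; linarith
  have := hd (u - k) huk (v - k) hvk (by rw [Real.dist_eq]; simpa using huv2)
  rw [Real.dist_eq, hGu, hGv] at this
  have : |G u - G v| < ε := by simpa using this
  linarith


variable {G G' : ℝ → ℝ} {a b t t' x x' ζ ζ' δ ε : ℝ}

lemma img_ne (ht : 0 ≤ t) : (G '' Set.Icc (ζ - t) ζ).Nonempty :=
  (Set.nonempty_Icc.2 (by linarith)).image _

lemma img_bdd (hb : ∀ u, G u ≤ u + b) : BddAbove (G '' Set.Icc (ζ - t) ζ) := by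
  refine ⟨ζ + b, ?_⟩
  rintro _ ⟨u, hu, rfl⟩
  have := hb u; have := hu.2; linarith

lemma le_M (hb : ∀ u, G u ≤ u + b) (ht : 0 ≤ t) : G ζ ≤ M G t ζ :=
  le_csSup (img_bdd hb) ⟨ζ, ⟨by linarith, le_rfl⟩, rfl⟩

lemma M_le (hb : ∀ u, G u ≤ u + b) (ht : 0 ≤ t) : M G t ζ ≤ ζ + b := by
  refine csSup_le (img_ne ht) ?_
  rintro _ ⟨u, hu, rfl⟩
  have := hb u; have := hu.2; linarith

lemma M_lb (ha : ∀ u, u + a ≤ G u) (hb : ∀ u, G u ≤ u + b) (ht : 0 ≤ t) :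
    ζ + a ≤ M G t ζ := le_trans (ha ζ) (le_M hb ht)

lemma M_mono_t (hb : ∀ u, G u ≤ u + b) (ht : 0 ≤ t) (htt : t ≤ t') :
    M G t ζ ≤ M G t' ζ :=
  csSup_le_csSup (img_bdd hb) (img_ne ht)
    (Set.image_mono (Set.Icc_subset_Icc (by linarith) le_rfl))

lemma Hr_img_ne : ((fun ζ => M G t ζ) '' Set.Ici x).Nonempty :=
  ⟨M G t x, ⟨x, Set.self_mem_Ici, rfl⟩⟩

lemma Hr_img_bdd (ha : ∀ u, u + a ≤ G u) (hb : ∀ u, G u ≤ u + b) (ht : 0 ≤ t) :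
    BddBelow ((fun ζ => M G t ζ) '' Set.Ici x) := by
  refine ⟨x + a, ?_⟩
  rintro _ ⟨ζ, hζ, rfl⟩
  have := M_lb (ζ := ζ) ha hb ht
  have : x ≤ ζ := hζ
  have := M_lb (ζ := ζ) ha hb ht
  linarith

lemma Hr_le_M (ha : ∀ u, u + a ≤ G u) (hb : ∀ u, G u ≤ u + b) (ht : 0 ≤ t)
    (hζ : x ≤ ζ) : Hr G t x ≤ M G t ζ :=
  csInf_le (Hr_img_bdd ha hb ht) ⟨ζ, hζ, rfl⟩

lemma le_Hr {c : ℝ} (h : ∀ ζ, x ≤ ζ → c ≤ M G t ζ) : c ≤ Hr G t x :=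
  le_csInf Hr_img_ne (by rintro _ ⟨ζ, hζ, rfl⟩; exact h ζ hζ)

lemma Hr_mono_x (ha : ∀ u, u + a ≤ G u) (hb : ∀ u, G u ≤ u + b) (ht : 0 ≤ t)
    (hxx : x ≤ x') : Hr G t x ≤ Hr G t x' :=
  le_csInf Hr_img_ne (by
    rintro _ ⟨ζ, hζ, rfl⟩
    exact Hr_le_M ha hb ht (le_trans hxx hζ))

lemma Hr_mono_t (ha : ∀ u, u + a ≤ G u) (hb : ∀ u, G u ≤ u + b) (ht : 0 ≤ t)
    (htt : t ≤ t') : Hr G t x ≤ Hr G t' x :=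
  le_csInf Hr_img_ne (by
    rintro _ ⟨ζ, hζ, rfl⟩
    exact le_trans (Hr_le_M ha hb ht hζ) (M_mono_t hb ht htt))

/-- main window comparison estimate -/
lemma M_shift (hb : ∀ u, G u ≤ u + b)
    (hmod : ∀ u v : ℝ, |u - v| ≤ δ → G u ≤ G v + ε)
    (ht : 0 ≤ t) (ht' : 0 ≤ t') (h : |ζ - ζ'| + |t - t'| ≤ δ) :
    M G t ζ ≤ M G t' ζ' + ε := by
  have hδ0 : 0 ≤ δ := le_trans (by positivity) h
  refine csSup_le (img_ne ht) ?_
  rintro _ ⟨u, hu, rfl⟩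
  set v : ℝ := max (ζ' - t') (min u ζ') with hv
  have hvmem : v ∈ Set.Icc (ζ' - t') ζ' :=
    ⟨le_max_left _ _, max_le (by linarith) (min_le_right _ _)⟩
  have habs1 : ζ - ζ' ≤ |ζ - ζ'| := le_abs_self _
  have habs1' : ζ' - ζ ≤ |ζ - ζ'| := by rw [abs_sub_comm]; exact le_abs_self _
  have habs2 : t - t' ≤ |t - t'| := le_abs_self _
  have habsnn : (0:ℝ) ≤ |t - t'| := abs_nonneg _
  have habsnn' : (0:ℝ) ≤ |ζ - ζ'| := abs_nonneg _
  have hclose : |u - v| ≤ δ := by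
    rcases le_total u ζ' with h1 | h1
    · rw [hv, min_eq_left h1]
      rcases le_total (ζ' - t') u with h2 | h2
      · rw [max_eq_right h2]; simpa using hδ0
      · rw [max_eq_left h2, abs_le]
        constructor
        · have := hu.1; linarith
        · linarith
    · rw [hv, min_eq_right h1, max_eq_right (by linarith), abs_le]
      constructor
      · linarith
      · have := hu.2; linarith
  refine le_trans (hmod u v hclose) ?_
  have := le_csSup (img_bdd hb (t := t') (ζ := ζ')) (Set.mem_image_of_mem G hvmem)
  unfold M
  linarith

lemma Hr_shift (ha : ∀ u, u + a ≤ G u) (hb : ∀ u, G u ≤ u + b)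
    (hmod : ∀ u v : ℝ, |u - v| ≤ δ → G u ≤ G v + ε)
    (ht : 0 ≤ t) (ht' : 0 ≤ t') (h : |x - x'| + |t - t'| ≤ δ) :
    Hr G t x ≤ Hr G t' x' + ε := by
  have key : ∀ ζ, x' ≤ ζ → Hr G t x ≤ M G t' ζ + ε := by
    intro ζ hζ
    have h1 : Hr G t x ≤ M G t (max ζ x) := Hr_le_M ha hb ht (le_max_right _ _)
    have h2 : M G t (max ζ x) ≤ M G t' ζ + ε := by
      refine M_shift hb hmod ht ht' ?_
      have : |max ζ x - ζ| ≤ |x - x'| := by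
        rcases le_total x ζ with hc | hc
        · rw [max_eq_left hc]; simpa using abs_nonneg _
        · rw [max_eq_right hc, abs_le]
          have := abs_le.1 (le_refl |x - x'|)
          constructor
          · linarith [abs_nonneg (x - x')]
          · have : x - x' ≤ |x - x'| := le_abs_self _
            linarith
      linarith
    linarith
  have : Hr G t x - ε ≤ Hr G t' x' :=
    le_csInf Hr_img_ne (by rintro _ ⟨ζ, hζ, rfl⟩; have := key ζ hζ; linarith)
  linarith

/-- closeness in `G` -/
lemma Hr_close (ha : ∀ u, u + a ≤ G u) (hb : ∀ u, G u ≤ u + b)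
    (hb' : ∀ u, G' u ≤ u + b) (ht : 0 ≤ t)
    (hGG' : ∀ u, G u ≤ G' u + δ) : Hr G t x ≤ Hr G' t x + δ := by
  have hM : ∀ ζ, M G t ζ ≤ M G' t ζ + δ := by
    intro ζ
    refine csSup_le (img_ne ht) ?_
    rintro _ ⟨u, hu, rfl⟩
    have h1 := le_csSup (img_bdd hb' (t := t) (ζ := ζ)) (Set.mem_image_of_mem G' hu)
    have h2 := hGG' u
    unfold M
    linarith
  have : Hr G t x - δ ≤ Hr G' t x :=
    le_csInf Hr_img_ne (by
      rintro _ ⟨ζ, hζ, rfl⟩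
      have h1 := Hr_le_M ha hb ht hζ
      have h2 := hM ζ
      linarith)
  linarith


lemma sSup_image_add (s : Set ℝ) (hne : s.Nonempty) (hb : BddAbove s) (c : ℝ) :
    sSup ((fun y => y + c) '' s) = sSup s + c := by
  obtain ⟨B, hB⟩ := hb
  apply le_antisymm
  · refine csSup_le (hne.image _) ?_
    rintro _ ⟨y, hy, rfl⟩
    have := le_csSup ⟨B, hB⟩ hy
    simp only []
    linarith
  · have hbi : BddAbove ((fun y => y + c) '' s) := by
      refine ⟨B + c, ?_⟩; rintro _ ⟨y, hy, rfl⟩; have := hB hy; simp at this ⊢; linarith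
    have : sSup s ≤ sSup ((fun y => y + c) '' s) - c := by
      refine csSup_le hne fun y hy => ?_
      have := le_csSup hbi (Set.mem_image_of_mem _ hy)
      linarith
    linarith

lemma sInf_image_add (s : Set ℝ) (hne : s.Nonempty) (hb : BddBelow s) (c : ℝ) :
    sInf ((fun y => y + c) '' s) = sInf s + c := by
  obtain ⟨B, hB⟩ := hb
  apply le_antisymm
  · have hbi : BddBelow ((fun y => y + c) '' s) := by
      refine ⟨B + c, ?_⟩; rintro _ ⟨y, hy, rfl⟩; have := hB hy; simp at this ⊢; linarith
    have : sInf ((fun y => y + c) '' s) - c ≤ sInf s := by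
      refine le_csInf hne fun y hy => ?_
      have := csInf_le hbi (Set.mem_image_of_mem _ hy)
      linarith
    linarith
  · refine le_csInf (hne.image _) ?_
    rintro _ ⟨y, hy, rfl⟩
    have := csInf_le ⟨B, hB⟩ hy
    simp only []
    linarith

lemma M_add {G : ℝ → ℝ} {b t : ℝ} (hG : Good G) (hb : ∀ u, G u ≤ u + b) (ht : 0 ≤ t)
    (k : ℤ) (ζ : ℝ) : M G t (ζ + k) = M G t ζ + k := by
  have hIcc : Set.Icc (ζ + (k:ℝ) - t) (ζ + (k:ℝ)) = (fun x => x + (k:ℝ)) '' Set.Icc (ζ - t) ζ := by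
    rw [Set.image_add_const_Icc]; congr 1; ring
  have himg : G '' Set.Icc (ζ + (k:ℝ) - t) (ζ + (k:ℝ))
      = (fun y => y + (k:ℝ)) '' (G '' Set.Icc (ζ - t) ζ) := by
    rw [hIcc, Set.image_image, Set.image_image]
    exact Set.image_congr fun u _ => hG.2 u k
  show sSup _ = sSup _ + _
  rw [himg, sSup_image_add _ (img_ne ht) (img_bdd hb)]

lemma Hr_add {G : ℝ → ℝ} {a b t : ℝ} (hG : Good G) (ha : ∀ u, u + a ≤ G u)
    (hb : ∀ u, G u ≤ u + b) (ht : 0 ≤ t) (k : ℤ) (x : ℝ) :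
    Hr G t (x + k) = Hr G t x + k := by
  have himg : (fun ζ => M G t ζ) '' Set.Ici (x + (k:ℝ))
      = (fun y => y + (k:ℝ)) '' ((fun ζ => M G t ζ) '' Set.Ici x) := by
    rw [show Set.Ici (x + (k:ℝ)) = (fun z => z + (k:ℝ)) '' Set.Ici x from
      (Set.image_add_const_Ici _ _).symm, Set.image_image, Set.image_image]
    exact Set.image_congr fun ζ _ => M_add hG hb ht k ζ
  show sInf _ = sInf _ + _
  rw [himg, sInf_image_add _ Hr_img_ne (Hr_img_bdd ha hb ht)]

lemma M_zero {G : ℝ → ℝ} (ζ : ℝ) : M G 0 ζ = G ζ := by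
  unfold M; rw [sub_zero, Set.Icc_self, Set.image_singleton, csSup_singleton]

lemma Hr_zero {G : ℝ → ℝ} (x : ℝ) : Hr G 0 x = sInf (G '' Set.Ici x) := by
  unfold Hr
  congr 1
  exact Set.image_congr fun ζ _ => M_zero ζ

lemma le_M_one {G : ℝ → ℝ} {b : ℝ} (hG : Good G) (hb : ∀ u, G u ≤ u + b)
    {u ζ' : ℝ} (h : u ≤ ζ') : G u ≤ M G 1 ζ' := by
  rcases le_total (ζ' - 1) u with h1 | h1
  · exact le_csSup (img_bdd hb) ⟨u, ⟨h1, h⟩, rfl⟩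
  · set k : ℤ := ⌈ζ' - 1 - u⌉ with hk
    have hk0 : (0:ℝ) ≤ (k:ℝ) := by
      have h2 := Int.le_ceil (ζ' - 1 - u)
      have : (0:ℝ) ≤ ζ' - 1 - u := by linarith
      exact le_trans this h2
    have hmem : u + (k:ℝ) ∈ Set.Icc (ζ' - 1) ζ' := by
      constructor
      · have := Int.le_ceil (ζ' - 1 - u); linarith
      · have := Int.ceil_lt_add_one (ζ' - 1 - u); linarith
    have hle : G u ≤ G (u + (k:ℝ)) := by rw [hG.2 u k]; linarith
    exact le_trans hle (le_csSup (img_bdd hb) ⟨u + (k:ℝ), hmem, rfl⟩)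

lemma M_one_mono {G : ℝ → ℝ} {b : ℝ} (hG : Good G) (hb : ∀ u, G u ≤ u + b) :
    Monotone (M G 1) := by
  intro ζ ζ' h
  refine csSup_le (img_ne zero_le_one) ?_
  rintro _ ⟨u, hu, rfl⟩
  exact le_M_one hG hb (le_trans hu.2 h)

lemma M_one_eq {G : ℝ → ℝ} {b : ℝ} (hG : Good G) (hb : ∀ u, G u ≤ u + b) (x : ℝ) :
    M G 1 x = sSup (G '' Set.Iic x) := by
  apply le_antisymm
  · refine csSup_le (img_ne zero_le_one) ?_
    rintro _ ⟨u, hu, rfl⟩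
    refine le_csSup ⟨x + b, ?_⟩ ⟨u, hu.2, rfl⟩
    rintro _ ⟨w, hw, rfl⟩
    have h1 := hb w
    have h2 : w ≤ x := hw
    linarith
  · refine csSup_le (Set.nonempty_Iic.image _) ?_
    rintro _ ⟨u, hu, rfl⟩
    exact le_M_one hG hb hu

lemma Hr_one {G : ℝ → ℝ} {a b : ℝ} (hG : Good G) (ha : ∀ u, u + a ≤ G u)
    (hb : ∀ u, G u ≤ u + b) (x : ℝ) : Hr G 1 x = sSup (G '' Set.Iic x) := by
  rw [← M_one_eq hG hb x]
  apply le_antisymm (Hr_le_M ha hb zero_le_one le_rfl)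
  exact le_Hr fun ζ hζ => M_one_mono hG hb hζ

lemma M_cont {G : ℝ → ℝ} {b t : ℝ} (hG : Good G) (hb : ∀ u, G u ≤ u + b) (ht : 0 ≤ t) :
    Continuous (fun ζ => M G t ζ) := by
  rw [Metric.continuous_iff]
  intro ζ0 ε hε
  obtain ⟨δ, hδ, hmod⟩ := hG.ucont (half_pos hε)
  have hmod' : ∀ u v : ℝ, |u - v| ≤ δ → G u ≤ G v + ε/2 := fun u v h => by
    have := (abs_le.1 (hmod u v h)).2; linarith
  refine ⟨δ, hδ, fun ζ hζ => ?_⟩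
  rw [Real.dist_eq] at hζ ⊢
  have h1 : M G t ζ ≤ M G t ζ0 + ε/2 :=
    M_shift hb hmod' ht ht (by rw [sub_self, abs_zero, add_zero]; exact hζ.le)
  have h2 : M G t ζ0 ≤ M G t ζ + ε/2 :=
    M_shift hb hmod' ht ht
      (by rw [sub_self, abs_zero, add_zero, abs_sub_comm]; exact hζ.le)
  rw [abs_lt]; constructor <;> linarith

lemma exists_min {G : ℝ → ℝ} {a b t : ℝ} (hG : Good G) (ha : ∀ u, u + a ≤ G u)
    (hb : ∀ u, G u ≤ u + b) (ht : 0 ≤ t) (x : ℝ) :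
    ∃ ζ0, x ≤ ζ0 ∧ M G t ζ0 = Hr G t x := by
  have hab : a ≤ b := by have h1 := ha 0; have h2 := hb 0; linarith
  set R : ℝ := b - a + 1 with hR
  obtain ⟨ζ0, hmem, hmin⟩ := isCompact_Icc.exists_isMinOn (s := Set.Icc x (x + R))
    (Set.nonempty_Icc.2 (by linarith)) ((M_cont hG hb ht).continuousOn)
  have hmin' := isMinOn_iff.1 hmin
  refine ⟨ζ0, hmem.1, ?_⟩
  apply le_antisymm _ (Hr_le_M ha hb ht hmem.1)
  refine le_Hr fun ζ hζ => ?_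
  rcases le_total ζ (x + R) with hc | hc
  · exact hmin' ζ ⟨hζ, hc⟩
  · have h1 : M G t ζ0 ≤ M G t x := hmin' x ⟨le_rfl, by linarith⟩
    have h2 : M G t x ≤ x + b := M_le hb ht
    have h3 : ζ + a ≤ M G t ζ := M_lb ha hb ht
    linarith

lemma plateau {G : ℝ → ℝ} {a b t x : ℝ} (hG : Good G) (ha : ∀ u, u + a ≤ G u)
    (hb : ∀ u, G u ≤ u + b) (ht : 0 ≤ t) (hne : Hr G t x ≠ G x) :
    ∃ ε > 0, ∀ y ∈ Set.Icc (x - ε) (x + ε), Hr G t y = Hr G t x := by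
  have f4 : ∀ ζ, x ≤ ζ → Hr G t x ≤ M G t ζ := fun ζ hζ => Hr_le_M ha hb ht hζ
  rcases lt_or_gt_of_ne hne with hlt | hgt
  · -- Case 1 : Hr G t x < G x
    set η : ℝ := (G x - Hr G t x) / 2 with hη
    have hηpos : 0 < η := by rw [hη]; linarith
    obtain ⟨δ2, hδ2, hmodη⟩ := hG.ucont hηpos
    have hGlb : ∀ u, |u - x| ≤ δ2 → Hr G t x + η ≤ G u := by
      intro u h
      have := (abs_le.1 (hmodη u x h)).1
      rw [hη] at *; linarith
    refine ⟨δ2, hδ2, fun y hy => ?_⟩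
    rcases le_total y x with hyx | hyx
    · apply le_antisymm (Hr_mono_x ha hb ht hyx)
      refine le_Hr fun ζ hζ => ?_
      rcases le_total x ζ with h | h
      · exact f4 ζ h
      · have h5 : |ζ - x| ≤ δ2 := by
          rw [abs_le]; exact ⟨by linarith [hy.1], by linarith⟩
        have h6 := hGlb ζ h5
        have h7 : G ζ ≤ M G t ζ := le_M hb ht
        linarith
    · apply le_antisymm _ (le_Hr (x := y) fun ζ hζ => f4 ζ (le_trans hyx hζ))
      by_contra hcon
      push_neg at hcon
      have hlb : min (Hr G t y) (Hr G t x + η) ≤ Hr G t x := by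
        refine le_csInf Hr_img_ne ?_
        rintro _ ⟨ζ, hζ, rfl⟩
        rcases le_total y ζ with h | h
        · exact le_trans (min_le_left _ _) (Hr_le_M ha hb ht h)
        · have h5 : |ζ - x| ≤ δ2 := by
            rw [abs_le]
            constructor
            · have : x ≤ ζ := hζ; linarith
            · have := hy.2; linarith
          have h6 := hGlb ζ h5
          have h7 : G ζ ≤ M G t ζ := le_M hb ht
          exact le_trans (min_le_right _ _) (by simp only []; linarith)
      exact absurd hlb (not_le.2 (lt_min hcon (by linarith)))
  · -- Case 2 : Hr G t x > G x
    set η : ℝ := (Hr G t x - G x) / 2 with hη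
    have hηpos : 0 < η := by rw [hη]; linarith
    obtain ⟨δ2, hδ2, hmodη⟩ := hG.ucont hηpos
    have hub : ∀ u, |u - x| ≤ δ2 → G u ≤ Hr G t x - η := by
      intro u h
      have := (abs_le.1 (hmodη u x h)).2
      rw [hη] at *; linarith
    have stepB : ∀ ζ ∈ Set.Icc (x - δ2) x, Hr G t x ≤ M G t ζ := by
      intro ζ hζ
      have hMx : Hr G t x ≤ M G t x := f4 x le_rfl
      have hcmp : M G t x ≤ max (M G t ζ) (Hr G t x - η) := by
        refine csSup_le (img_ne ht) ?_
        rintro _ ⟨u, hu, rfl⟩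
        rcases le_total u ζ with h | h
        · refine le_trans (le_csSup (img_bdd hb) ⟨u, ⟨?_, h⟩, rfl⟩) (le_max_left _ _)
          have := hu.1; have := hζ.2; linarith
        · have h5 : |u - x| ≤ δ2 := by
            rw [abs_le]
            exact ⟨by linarith [hζ.1], by linarith [hu.2]⟩
          exact le_trans (hub u h5) (le_max_right _ _)
      rcases le_max_iff.1 hcmp with h | h
      · linarith
      · linarith
    obtain ⟨ζ0, hζ0x, hζ0⟩ := exists_min hG ha hb ht x
    have stepC : ∃ ζ1, x < ζ1 ∧ M G t ζ1 ≤ Hr G t x := by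
      rcases hζ0x.lt_or_eq with h | h
      · exact ⟨ζ0, h, le_of_eq hζ0⟩
      · have hMxc : M G t x = Hr G t x := by rw [← h] at hζ0; exact hζ0
        refine ⟨x + δ2, by linarith, ?_⟩
        refine csSup_le (img_ne ht) ?_
        rintro _ ⟨u, hu, rfl⟩
        rcases le_total u x with h6 | h6
        · have h7 : G u ≤ M G t x :=
            le_csSup (img_bdd hb) ⟨u, ⟨by linarith [hu.1], h6⟩, rfl⟩
          linarith [hMxc]
        · have h5 : |u - x| ≤ δ2 := by
            rw [abs_le]; exact ⟨by linarith, by linarith [hu.2]⟩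
          have := hub u h5; linarith
    obtain ⟨ζ1, hζ1x, hζ1⟩ := stepC
    refine ⟨min δ2 (ζ1 - x), lt_min hδ2 (by linarith), fun y hy => ?_⟩
    rcases le_total y x with hyx | hyx
    · apply le_antisymm (Hr_mono_x ha hb ht hyx)
      refine le_Hr fun ζ hζ => ?_
      rcases le_total x ζ with h | h
      · exact f4 ζ h
      · refine stepB ζ ⟨?_, h⟩
        have h8 := hy.1
        have h9 := min_le_left δ2 (ζ1 - x)
        linarith
    · apply le_antisymm _ (le_Hr (x := y) fun ζ hζ => f4 ζ (le_trans hyx hζ))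
      refine le_trans (Hr_le_M ha hb ht ?_) hζ1
      have h8 := hy.2
      have h9 := min_le_right δ2 (ζ1 - x)
      linarith

lemma good_of_lift (G : LiftSpace) : Good (UniformFun.toFun G.1) := ⟨G.2.1, G.2.2⟩

theorem Hr_cont :
    Continuous (fun p : ℝ × Set.Icc (0:ℝ) 1 × LiftSpace =>
      Hr (UniformFun.toFun p.2.2.1) (p.2.1 : ℝ) p.1) := by
  rw [continuous_iff_continuousAt]
  rintro ⟨x0, t0, G0⟩
  have hG0 : Good (UniformFun.toFun G0.1) := good_of_lift G0
  obtain ⟨a0, b0, hab0, ha0, hb0⟩ := hG0.bounds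
  rw [ContinuousAt, Metric.tendsto_nhds]
  intro ε hε
  have hε3 : 0 < ε/3 := by linarith
  obtain ⟨δ0, hδ0, hmod⟩ := hG0.ucont hε3
  have hmod' : ∀ u v : ℝ, |u - v| ≤ δ0 →
      (UniformFun.toFun G0.1) u ≤ (UniformFun.toFun G0.1) v + ε/3 := fun u v h => by
    have := (abs_le.1 (hmod u v h)).2; linarith
  set δ1 : ℝ := δ0/2 with hδ1def
  have hδ1 : 0 < δ1 := by rw [hδ1def]; linarith
  have e1 : ∀ᶠ p : ℝ × Set.Icc (0:ℝ) 1 × LiftSpace in 𝓝 (x0, t0, G0),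
      |p.1 - x0| < δ1 := by
    have h0 : ∀ᶠ z : ℝ in 𝓝 x0, |z - x0| < δ1 := by
      refine Filter.mem_of_superset (Metric.ball_mem_nhds x0 hδ1) ?_
      intro z hz; simpa [Real.dist_eq] using hz
    exact (continuous_fst.tendsto (x0, t0, G0)).eventually h0
  have e2 : ∀ᶠ p : ℝ × Set.Icc (0:ℝ) 1 × LiftSpace in 𝓝 (x0, t0, G0),
      |((p.2.1 : ℝ)) - (t0 : ℝ)| < δ1 := by
    have h0 : ∀ᶠ z : ℝ in 𝓝 (t0 : ℝ), |z - (t0:ℝ)| < δ1 := by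
      refine Filter.mem_of_superset (Metric.ball_mem_nhds _ hδ1) ?_
      intro z hz; simpa [Real.dist_eq] using hz
    exact ((continuous_subtype_val.comp
      (continuous_fst.comp continuous_snd)).tendsto (x0, t0, G0)).eventually h0
  have e3 : ∀ᶠ p : ℝ × Set.Icc (0:ℝ) 1 × LiftSpace in 𝓝 (x0, t0, G0),
      ∀ u, dist (UniformFun.toFun G0.1 u) (UniformFun.toFun p.2.2.1 u) < ε/3 := by
    have h0 : ∀ᶠ g : ℝ →ᵤ ℝ in 𝓝 G0.1,
        ∀ u, dist (UniformFun.toFun G0.1 u) (UniformFun.toFun g u) < ε/3 := by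
      have hV : {q : ℝ × ℝ | dist q.1 q.2 < ε/3} ∈ uniformity ℝ :=
        Metric.dist_mem_uniformity hε3
      refine Filter.mem_of_superset ((UniformFun.hasBasis_nhds ℝ ℝ G0.1).mem_of_mem hV) ?_
      intro g hg u; exact hg u
    exact ((continuous_subtype_val.comp
      (continuous_snd.comp continuous_snd)).tendsto (x0, t0, G0)).eventually h0
  filter_upwards [e1, e2, e3] with p h1 h2 h3
  have hGp : Good (UniformFun.toFun p.2.2.1) := good_of_lift p.2.2
  obtain ⟨a1, b1, hab1, ha1, hb1⟩ := hGp.bounds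
  set b2 : ℝ := max b0 b1 with hb2def
  have hb0' : ∀ u, UniformFun.toFun G0.1 u ≤ u + b2 := fun u =>
    le_trans (hb0 u) (by have := le_max_left b0 b1; rw [hb2def]; linarith)
  have hb1' : ∀ u, UniformFun.toFun p.2.2.1 u ≤ u + b2 := fun u =>
    le_trans (hb1 u) (by have := le_max_right b0 b1; rw [hb2def]; linarith)
  have ht : (0:ℝ) ≤ (p.2.1 : ℝ) := p.2.1.2.1
  have ht0 : (0:ℝ) ≤ (t0 : ℝ) := t0.2.1
  -- step 1 : closeness in G
  have hgg1 : ∀ u, UniformFun.toFun p.2.2.1 u ≤ UniformFun.toFun G0.1 u + ε/3 := by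
    intro u
    have := h3 u; rw [Real.dist_eq] at this
    have := (abs_le.1 this.le).1; linarith
  have hgg2 : ∀ u, UniformFun.toFun G0.1 u ≤ UniformFun.toFun p.2.2.1 u + ε/3 := by
    intro u
    have := h3 u; rw [Real.dist_eq] at this
    have := (abs_le.1 this.le).2; linarith
  have hs1a : Hr (UniformFun.toFun p.2.2.1) (p.2.1 : ℝ) p.1
      ≤ Hr (UniformFun.toFun G0.1) (p.2.1 : ℝ) p.1 + ε/3 :=
    Hr_close ha1 hb1' hb0' ht hgg1
  have hs1b : Hr (UniformFun.toFun G0.1) (p.2.1 : ℝ) p.1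
      ≤ Hr (UniformFun.toFun p.2.2.1) (p.2.1 : ℝ) p.1 + ε/3 :=
    Hr_close ha0 hb0' hb1' ht hgg2
  -- step 2 : closeness in (x, t)
  have hdx : |p.1 - x0| + |(p.2.1 : ℝ) - (t0 : ℝ)| ≤ δ0 := by
    rw [hδ1def] at h1 h2; linarith
  have hdx' : |x0 - p.1| + |(t0 : ℝ) - (p.2.1 : ℝ)| ≤ δ0 := by
    rw [abs_sub_comm x0 p.1, abs_sub_comm (t0:ℝ) _]; exact hdx
  have hs2a : Hr (UniformFun.toFun G0.1) (p.2.1 : ℝ) p.1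
      ≤ Hr (UniformFun.toFun G0.1) (t0 : ℝ) x0 + ε/3 :=
    Hr_shift ha0 hb0 hmod' ht ht0 hdx
  have hs2b : Hr (UniformFun.toFun G0.1) (t0 : ℝ) x0
      ≤ Hr (UniformFun.toFun G0.1) (p.2.1 : ℝ) p.1 + ε/3 :=
    Hr_shift ha0 hb0 hmod' ht0 ht hdx'
  rw [Real.dist_eq, abs_lt]
  constructor <;> linarith


lemma Hr_cont_x {G : ℝ → ℝ} {a b t : ℝ} (hG : Good G) (ha : ∀ u, u + a ≤ G u)
    (hb : ∀ u, G u ≤ u + b) (ht : 0 ≤ t) : Continuous fun x => Hr G t x := by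
  rw [Metric.continuous_iff]
  intro x0 ε hε
  obtain ⟨δ, hδ, hmod⟩ := hG.ucont (half_pos hε)
  have hmod' : ∀ u v : ℝ, |u - v| ≤ δ → G u ≤ G v + ε/2 := fun u v h => by
    have := (abs_le.1 (hmod u v h)).2; linarith
  refine ⟨δ, hδ, fun x hx => ?_⟩
  rw [Real.dist_eq] at hx ⊢
  have h1 : Hr G t x ≤ Hr G t x0 + ε/2 :=
    Hr_shift ha hb hmod' ht ht (by rw [sub_self, abs_zero, add_zero]; exact hx.le)
  have h2 : Hr G t x0 ≤ Hr G t x + ε/2 :=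
    Hr_shift ha hb hmod' ht ht
      (by rw [sub_self, abs_zero, add_zero, abs_sub_comm]; exact hx.le)
  rw [abs_lt]; constructor <;> linarith

end Stmt8Aux

theorem stmt8 :
    ∃ H : ℝ → Set.Icc (0 : ℝ) 1 → LiftSpace → ℝ,
      -- continuity of `(x,t,G) ↦ G_t(x)` on `ℝ × [0,1] × E`
      Continuous (fun p : ℝ × Set.Icc (0 : ℝ) 1 × LiftSpace => H p.1 p.2.1 p.2.2) ∧
      -- (i) `(G_t)` is a homotopy between `G⁻` and `G⁺`
      (∀ (G : LiftSpace) (x : ℝ),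
        H x ⟨0, by norm_num⟩ G = sInf (UniformFun.toFun G.1 '' Set.Ici x) ∧
        H x ⟨1, by norm_num⟩ G = sSup (UniformFun.toFun G.1 '' Set.Iic x)) ∧
      -- (ii) each `G_t` is a plateau map, i.e. lies in `E_mon`
      (∀ (t : Set.Icc (0 : ℝ) 1) (G : LiftSpace),
        Continuous (fun x => H x t G) ∧ Monotone (fun x => H x t G) ∧
        ∀ (x : ℝ) (k : ℤ), H (x + k) t G = H x t G + k) ∧
      -- (iii) `t ↦ G_t(x)` is monotonically increasing
      (∀ (x : ℝ) (G : LiftSpace), Monotone fun t : Set.Icc (0 : ℝ) 1 => H x t G) ∧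
      -- (iv) if `G_t(x) ≠ G(x)` then `x ∈ U(G_t)`
      (∀ (x : ℝ) (t : Set.Icc (0 : ℝ) 1) (G : LiftSpace),
        H x t G ≠ UniformFun.toFun G.1 x → x ∈ plateauU fun y => H y t G) := by
  refine ⟨fun x t G => Stmt8Aux.Hr (UniformFun.toFun G.1) (t : ℝ) x, ?_, ?_, ?_, ?_, ?_⟩
  · exact Stmt8Aux.Hr_cont
  · intro G x
    have hG := Stmt8Aux.good_of_lift G
    obtain ⟨a, b, hab, ha, hb⟩ := hG.bounds
    exact ⟨Stmt8Aux.Hr_zero x, Stmt8Aux.Hr_one hG ha hb x⟩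
  · intro t G
    have hG := Stmt8Aux.good_of_lift G
    obtain ⟨a, b, hab, ha, hb⟩ := hG.bounds
    refine ⟨?_, ?_, ?_⟩
    · exact Stmt8Aux.Hr_cont_x hG ha hb t.2.1
    · intro x y hxy
      exact Stmt8Aux.Hr_mono_x ha hb t.2.1 hxy
    · intro x k
      exact Stmt8Aux.Hr_add hG ha hb t.2.1 k x
  · intro x G
    have hG := Stmt8Aux.good_of_lift G
    obtain ⟨a, b, hab, ha, hb⟩ := hG.bounds
    intro t t' htt
    exact Stmt8Aux.Hr_mono_t ha hb t.2.1 htt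
  · intro x t G hne
    have hG := Stmt8Aux.good_of_lift G
    obtain ⟨a, b, hab, ha, hb⟩ := hG.bounds
    have := Stmt8Aux.plateau hG ha hb t.2.1 hne
    simpa [plateauU] using this
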